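/- arXiv:0901.4766 — 2 statements merged into one kernel-verified Lean document; each statement's English description precedes it below -/
import Mathlib

section
/- There exist a real number β > 0, a positive integer α, a real number μ > 0 with μα − β > 1, and a real number r > 0, such that ∑_{k=1}^{∞} 2(−1)^{k−1} k^{β}/(k^{α} + r^2)^{μ} > 2/(1 + r^2)^{μ}. (Thus Tomovski–Hilfer's claimed inequality in the case β > 0, α ∈ ℕ, μα − β > 1 is false in general.) -/
open Finset Filter Topology

/-- The absolute value sequence: `a k = k^30 / (k+7)^100`. -/
noncomputable def THa (k : ℕ) : ℝ := (k : ℝ) ^ 30 / ((k : ℝ) + 7) ^ 100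

/-- The signed series terms over `ℕ`. -/
noncomputable def THg (i : ℕ) : ℝ := 2 * (-1 : ℝ) ^ i * THa (i + 1)

lemma THa_nonneg (k : ℕ) : 0 ≤ THa k := by unfold THa; positivity

lemma THa_le (k : ℕ) : THa k ≤ 1 / ((k : ℝ) + 7) ^ 70 := by
  unfold THa
  rw [div_le_div_iff₀ (by positivity) (by positivity)]
  have hk : (0:ℝ) ≤ (k:ℝ) := Nat.cast_nonneg k
  calc (k:ℝ) ^ 30 * ((k:ℝ) + 7) ^ 70 ≤ ((k:ℝ) + 7) ^ 30 * ((k:ℝ) + 7) ^ 70 := by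
        gcongr <;> linarith
    _ = 1 * ((k:ℝ) + 7) ^ 100 := by ring

lemma THg_norm (i : ℕ) : ‖THg i‖ = 2 * THa (i + 1) := by
  unfold THg
  rw [norm_mul, norm_mul]
  simp [abs_of_nonneg (THa_nonneg (i+1))]

lemma THg_summable : Summable THg := by
  apply Summable.of_norm
  have h2 : Summable (fun n : ℕ => 1 / (n:ℝ) ^ 2) := by
    rw [Real.summable_one_div_nat_pow]
    norm_num
  have h3 : Summable (fun i : ℕ => 2 * (1 / ((i:ℝ) + 1) ^ 2)) := by
    apply Summable.mul_left
    have := (summable_nat_add_iff 1).mpr h2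
    simpa using this
  apply h3.of_nonneg_of_le (fun i => norm_nonneg _)
  intro i
  rw [THg_norm]
  have h1 : THa (i + 1) ≤ 1 / (((i+1:ℕ):ℝ) + 7) ^ 70 := THa_le (i+1)
  have h4 : (1:ℝ) / (((i+1:ℕ):ℝ) + 7) ^ 70 ≤ 1 / ((i:ℝ) + 1) ^ 2 := by
    push_cast
    apply one_div_le_one_div_of_le (by positivity)
    have hk : (0:ℝ) ≤ (i:ℝ) := Nat.cast_nonneg i
    calc ((i:ℝ) + 1) ^ 2 ≤ ((i:ℝ) + 8) ^ 2 := by nlinarith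
      _ ≤ ((i:ℝ) + 8) ^ 70 := by
          apply pow_le_pow_right₀ (by linarith) (by norm_num)
      _ = ((i:ℝ) + 1 + 7) ^ 70 := by ring_nf
  nlinarith [THa_nonneg (i+1)]

lemma THtelescope : HasSum (fun i : ℕ => 1 / ((i:ℝ) + 18) - 1 / ((i:ℝ) + 19)) (1/18) := by
  rw [hasSum_iff_tendsto_nat_of_nonneg]
  · have heq : ∀ n : ℕ, ∑ i ∈ range n, (1 / ((i:ℝ) + 18) - 1 / ((i:ℝ) + 19))
        = 1/18 - 1/((n:ℝ) + 18) := by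
      intro n
      induction n with
      | zero => norm_num
      | succ n ih =>
        rw [sum_range_succ, ih]
        push_cast
        have h1 : ((n:ℝ) + 18) ≠ 0 := by positivity
        have h2 : ((n:ℝ) + 19) ≠ 0 := by positivity
        field_simp
        ring
    simp only [heq]
    have : Tendsto (fun n : ℕ => 1 / ((n:ℝ) + 18)) atTop (𝓝 0) := by
      simp only [one_div]
      exact Filter.Tendsto.comp tendsto_inv_atTop_zero
        (tendsto_atTop_add_const_right _ 18 tendsto_natCast_atTop_atTop)
    have h0 := (tendsto_const_nhds (x := (1/18:ℝ))).sub this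
    simpa using h0
  · intro i
    have h1 : (0:ℝ) < (i:ℝ) + 18 := by positivity
    have h2 : ((i:ℝ) + 18) ≤ (i:ℝ) + 19 := by linarith
    have := one_div_le_one_div_of_le h1 h2
    linarith

lemma THtail_pointwise (i : ℕ) :
    ‖THg (i + 11)‖ ≤ 2 / 19 ^ 68 * (1 / ((i:ℝ) + 18) - 1 / ((i:ℝ) + 19)) := by
  rw [THg_norm]
  have h1 : THa (i + 11 + 1) ≤ 1 / (((i+12:ℕ):ℝ) + 7) ^ 70 := THa_le (i + 12)
  have h18 : (0:ℝ) < (i:ℝ) + 18 := by positivity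
  have h19 : (0:ℝ) < (i:ℝ) + 19 := by positivity
  have hdiff : 1 / ((i:ℝ) + 18) - 1 / ((i:ℝ) + 19) = 1 / (((i:ℝ) + 18) * ((i:ℝ) + 19)) := by
    field_simp
    norm_num
  rw [hdiff]
  have hkey : (19:ℝ) ^ 68 * (((i:ℝ) + 18) * ((i:ℝ) + 19)) ≤ ((i:ℝ) + 19) ^ 70 := by
    have hbase : (19:ℝ) ≤ (i:ℝ) + 19 := by
      linarith [show (0:ℝ) ≤ (i:ℝ) from Nat.cast_nonneg i]
    have h68 : (19:ℝ) ^ 68 ≤ ((i:ℝ) + 19) ^ 68 := by gcongr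
    have hsq : ((i:ℝ) + 18) * ((i:ℝ) + 19) ≤ ((i:ℝ) + 19) ^ 2 := by nlinarith
    calc (19:ℝ) ^ 68 * (((i:ℝ) + 18) * ((i:ℝ) + 19))
        ≤ ((i:ℝ) + 19) ^ 68 * ((i:ℝ) + 19) ^ 2 := by
          apply mul_le_mul h68 hsq (by positivity) (by positivity)
      _ = ((i:ℝ) + 19) ^ 70 := by ring
  have h2 : (1:ℝ) / (((i+12:ℕ):ℝ) + 7) ^ 70
      ≤ 1 / 19 ^ 68 * (1 / (((i:ℝ) + 18) * ((i:ℝ) + 19))) := by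
    push_cast
    rw [show ((i:ℝ) + 12 + 7) = (i:ℝ) + 19 by ring]
    rw [div_mul_div_comm, one_mul, div_le_div_iff₀ (by positivity) (by positivity)]
    linarith
  have h3 : THa (i + 11 + 1) ≤ 1 / 19 ^ 68 * (1 / (((i:ℝ) + 18) * ((i:ℝ) + 19))) := by
    have : THa (i + 11 + 1) = THa (i + 12) := by norm_num
    rw [this]; exact le_trans h1 h2
  have hpos : (0:ℝ) ≤ 1 / (((i:ℝ) + 18) * ((i:ℝ) + 19)) := by positivity
  calc 2 * THa (i + 11 + 1) ≤ 2 * (1 / 19 ^ 68 * (1 / (((i:ℝ) + 18) * ((i:ℝ) + 19)))) := by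
        linarith
    _ = 2 / 19 ^ 68 * (1 / (((i:ℝ) + 18) * ((i:ℝ) + 19))) := by ring

/-- Counterexample to the Tomovski–Hilfer inequality in the case `β > 0`, `α ∈ ℕ`,
`μα − β > 1`: there exist such parameters and `r > 0` for which
`∑_{k≥1} 2(−1)^{k−1} k^β/(k^α + r^2)^μ > 2/(1 + r^2)^μ`. -/
theorem tomovski_hilfer_counterexample_nat_alpha :
    ∃ β : ℝ, 0 < β ∧ ∃ α : ℕ, 0 < α ∧ ∃ μ : ℝ, 0 < μ ∧ μ * α - β > 1 ∧
      ∃ r : ℝ, 0 < r ∧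
        (∑' k : ℕ+, 2 * (-1 : ℝ) ^ ((k : ℕ) - 1) * (k : ℝ) ^ β / ((k : ℝ) ^ α + r ^ 2) ^ μ) >
          2 / (1 + r ^ 2) ^ μ := by
  refine ⟨30, by norm_num, 1, one_pos, 100, by norm_num, by norm_num,
    Real.sqrt 7, Real.sqrt_pos.mpr (by norm_num), ?_⟩
  have hr2 : Real.sqrt 7 ^ 2 = 7 := Real.sq_sqrt (by norm_num)
  -- reindex the sum over ℕ+ to a sum over ℕ
  rw [← Equiv.tsum_eq Equiv.pnatEquivNat.symm]
  have hterm : ∀ i : ℕ,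
      2 * (-1 : ℝ) ^ (((Equiv.pnatEquivNat.symm i : ℕ+) : ℕ) - 1)
        * ((Equiv.pnatEquivNat.symm i : ℕ+) : ℝ) ^ (30:ℝ)
        / (((Equiv.pnatEquivNat.symm i : ℕ+) : ℝ) ^ 1 + Real.sqrt 7 ^ 2) ^ (100:ℝ)
      = THg i := by
    intro i
    have hcoe : ((Equiv.pnatEquivNat.symm i : ℕ+) : ℕ) = i + 1 := by
      simp [Equiv.pnatEquivNat]
    rw [hcoe, hr2, Nat.add_sub_cancel, pow_one]
    rw [show (30:ℝ) = ((30:ℕ):ℝ) by norm_num, Real.rpow_natCast]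
    rw [show (100:ℝ) = ((100:ℕ):ℝ) by norm_num, Real.rpow_natCast]
    unfold THg THa
    push_cast
    ring
  rw [tsum_congr hterm, hr2]
  have hrhs : (2:ℝ) / (1 + 7) ^ (100:ℝ) = 2 / 8 ^ (100:ℕ) := by
    rw [show ((1:ℝ) + 7) = 8 by norm_num,
      show (100:ℝ) = ((100:ℕ):ℝ) by norm_num, Real.rpow_natCast]
  rw [hrhs]
  -- split off the first 11 terms
  rw [← Summable.sum_add_tsum_nat_add 11 THg_summable]
  -- bound the tail
  have hnorm_summable : Summable (fun i => ‖THg (i + 11)‖) :=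
    ((THg_summable.comp_injective (add_left_injective 11)).norm)
  have hbound_summable :
      Summable (fun i : ℕ => 2 / 19 ^ 68 * (1 / ((i:ℝ) + 18) - 1 / ((i:ℝ) + 19))) :=
    (THtelescope.mul_left (2 / 19 ^ 68)).summable
  have htail : |∑' i : ℕ, THg (i + 11)| ≤ 2 / 19 ^ 68 * (1 / 18) := by
    calc |∑' i : ℕ, THg (i + 11)| ≤ ∑' i : ℕ, ‖THg (i + 11)‖ :=
          norm_tsum_le_tsum_norm hnorm_summable
      _ ≤ ∑' i : ℕ, 2 / 19 ^ 68 * (1 / ((i:ℝ) + 18) - 1 / ((i:ℝ) + 19)) :=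
          Summable.tsum_le_tsum THtail_pointwise hnorm_summable hbound_summable
      _ = 2 / 19 ^ 68 * (1 / 18) := (THtelescope.mul_left (2 / 19 ^ 68)).tsum_eq
  have hkey : ∑ i ∈ range 11, THg i - 2 / 19 ^ 68 * (1 / 18) > 2 / 8 ^ (100:ℕ) := by
    simp only [Finset.sum_range_succ, Finset.sum_range_zero, THg, THa]
    norm_num
  have h1 := neg_abs_le (∑' i : ℕ, THg (i + 11))
  linarith
end

section
/- There exist real numbers β > 0, α > 0, a real number μ > 0 with μα − β > 1, and a real number r > 0, such that ∑_{k=1}^{∞} 2(−1)^{k−1} k^{β}/(k^{α} + r^2)^{μ} > 2/(1 + r^2)^{μ}. (Thus Tomovski–Hilfer's claimed inequality in the case β > 0, α > 0, μα − β > 1 is false in general.) -/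
open Real

/-- The series term, reindexed over `ℕ` (with `k = n+1`), for the concrete parameters
`β = 10`, `α = 100`, `μ = 1`, `r = 3^50`. -/
noncomputable def thTerm (n : ℕ) : ℝ :=
  2 * (-1 : ℝ) ^ n * ((n : ℝ) + 1) ^ 10 / (((n : ℝ) + 1) ^ 100 + 3 ^ 100)

lemma thTerm_den_pos (n : ℕ) : 0 < ((n : ℝ) + 1) ^ 100 + 3 ^ 100 := by positivity

lemma thTerm_abs_le (n : ℕ) : ‖thTerm n‖ ≤ 2 / ((n : ℝ) + 1) ^ 2 := by
  have hx : (1 : ℝ) ≤ (n : ℝ) + 1 := by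
    have := Nat.cast_nonneg (α := ℝ) n; linarith
  have hden := thTerm_den_pos n
  have h1 : ‖thTerm n‖ = 2 * ((n : ℝ) + 1) ^ 10 / (((n : ℝ) + 1) ^ 100 + 3 ^ 100) := by
    rw [thTerm, Real.norm_eq_abs, abs_div, abs_mul, abs_mul]
    rw [abs_of_pos hden, abs_pow, abs_neg, abs_one, one_pow, mul_one]
    rw [abs_of_nonneg (by positivity : (0:ℝ) ≤ ((n : ℝ) + 1) ^ 10)]
    norm_num
  rw [h1, div_le_div_iff₀ hden (by positivity)]
  have h2 : ((n : ℝ) + 1) ^ 10 * ((n : ℝ) + 1) ^ 2 = ((n : ℝ) + 1) ^ 12 := by ring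
  have h3 : ((n : ℝ) + 1) ^ 12 ≤ ((n : ℝ) + 1) ^ 100 := pow_le_pow_right₀ hx (by norm_num)
  have h4 : (0:ℝ) < (3:ℝ)^100 := by positivity
  calc 2 * ((n : ℝ) + 1) ^ 10 * ((n : ℝ) + 1) ^ 2 = 2 * ((n : ℝ) + 1) ^ 12 := by ring
    _ ≤ 2 * (((n : ℝ) + 1) ^ 100 + 3 ^ 100) := by linarith

lemma summable_inv_sq : Summable (fun n : ℕ => 2 / ((n : ℝ) + 1) ^ 2) := by
  have h1 : Summable (fun n : ℕ => 1 / ((n : ℝ)) ^ 2) :=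
    Real.summable_one_div_nat_pow.mpr one_lt_two
  have h2 : Summable (fun n : ℕ => 1 / ((n : ℝ) + 1) ^ 2) := by
    have := (summable_nat_add_iff (f := fun n : ℕ => 1 / ((n : ℝ)) ^ 2) 1).2 h1
    refine this.congr fun n => ?_
    push_cast
    ring
  have h3 := h2.mul_left 2
  refine h3.congr fun n => ?_
  ring

lemma summable_thTerm : Summable thTerm :=
  Summable.of_norm_bounded summable_inv_sq thTerm_abs_le

lemma tsum_inv_sq_le : (∑' n : ℕ, 1 / ((n : ℝ) + 1) ^ 2) ≤ 2 := by
  have h := hasSum_zeta_two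
  have h1 : Summable (fun n : ℕ => 1 / ((n : ℝ)) ^ 2) := h.summable
  have h0 : (∑' n : ℕ, 1 / ((n : ℝ)) ^ 2) = π ^ 2 / 6 := h.tsum_eq
  have hshift : (∑' n : ℕ, 1 / ((n : ℝ)) ^ 2)
      = 1 / ((0 : ℕ) : ℝ) ^ 2 + ∑' n : ℕ, 1 / (((n + 1 : ℕ)) : ℝ) ^ 2 :=
    Summable.tsum_eq_zero_add h1
  have heq : (∑' n : ℕ, 1 / (((n + 1 : ℕ)) : ℝ) ^ 2) = ∑' n : ℕ, 1 / ((n : ℝ) + 1) ^ 2 := by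
    congr 1; funext n; push_cast; ring
  have hpi : π ^ 2 / 6 ≤ 2 := by
    nlinarith [Real.pi_lt_d2, Real.pi_gt_three]
  rw [← heq]
  have : (∑' n : ℕ, 1 / (((n + 1 : ℕ)) : ℝ) ^ 2) = π ^ 2 / 6 := by
    rw [hshift] at h0; simpa using h0
  linarith [this]

/-- Bound on the tail `∑_{n} thTerm (n+4)`. -/
lemma thTerm_tail_bound : |∑' n : ℕ, thTerm (n + 4)| ≤ 4 / 4 ^ 88 := by
  have hb : ∀ n : ℕ, ‖thTerm (n + 4)‖ ≤ (2 / 4 ^ 88) * (1 / ((n : ℝ) + 1) ^ 2) := by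
    intro n
    set x : ℝ := (n : ℝ) + 5 with hx
    have hn0 : (0:ℝ) ≤ (n:ℝ) := Nat.cast_nonneg n
    have hx4 : (4 : ℝ) ≤ x := by rw [hx]; linarith
    have hx0 : (0 : ℝ) < x := by linarith
    have hn1 : (0 : ℝ) < (n : ℝ) + 1 := by positivity
    have hnx : (n : ℝ) + 1 ≤ x := by rw [hx]; linarith
    have hden : (0 : ℝ) < x ^ 100 + 3 ^ 100 := by positivity
    have h1 : ‖thTerm (n + 4)‖ = 2 * x ^ 10 / (x ^ 100 + 3 ^ 100) := by
      rw [thTerm, Real.norm_eq_abs, abs_div, abs_mul, abs_mul]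
      have hc : ((n + 4 : ℕ) : ℝ) + 1 = x := by rw [hx]; push_cast; ring
      rw [hc, abs_of_pos hden, abs_pow, abs_neg, abs_one, one_pow, mul_one,
        abs_of_nonneg (by positivity : (0:ℝ) ≤ x ^ 10)]
      norm_num
    rw [h1]
    rw [div_le_iff₀ hden]
    have key : 2 * x ^ 10 * (4 ^ 88 * ((n:ℝ) + 1) ^ 2) ≤ 2 * x ^ 100 := by
      have e1 : ((n:ℝ) + 1) ^ 2 ≤ x ^ 2 := by
        apply pow_le_pow_left₀ (by positivity) hnx
      have e2 : (4 : ℝ) ^ 88 ≤ x ^ 88 := pow_le_pow_left₀ (by norm_num) hx4 88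
      have e3 : 4 ^ 88 * ((n:ℝ) + 1) ^ 2 ≤ x ^ 88 * x ^ 2 := by
        apply mul_le_mul e2 e1 (by positivity) (by positivity)
      calc 2 * x ^ 10 * (4 ^ 88 * ((n:ℝ) + 1) ^ 2)
          ≤ 2 * x ^ 10 * (x ^ 88 * x ^ 2) := by
            apply mul_le_mul_of_nonneg_left e3 (by positivity)
        _ = 2 * x ^ 100 := by ring
    have hrhs : (2 / 4 ^ 88) * (1 / ((n : ℝ) + 1) ^ 2) * (x ^ 100 + 3 ^ 100)
        = (2 * (x ^ 100 + 3 ^ 100)) / (4 ^ 88 * ((n:ℝ) + 1) ^ 2) := by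
      field_simp
    rw [hrhs, le_div_iff₀ (by positivity)]
    nlinarith [pow_nonneg hx0.le 100, pow_pos (show (0:ℝ) < 3 by norm_num) 100,
      sq_nonneg ((n:ℝ)+1)]
  have hbsum : Summable (fun n : ℕ => (2 / 4 ^ 88 : ℝ) * (1 / ((n : ℝ) + 1) ^ 2)) := by
    have := summable_inv_sq.mul_left ((1:ℝ) / 4 ^ 88)
    refine this.congr fun n => ?_
    ring
  have hnormsum : Summable (fun n : ℕ => ‖thTerm (n + 4)‖) :=
    Summable.of_nonneg_of_le (fun n => norm_nonneg _) hb hbsum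
  calc |∑' n : ℕ, thTerm (n + 4)| ≤ ∑' n : ℕ, ‖thTerm (n + 4)‖ := by
        simpa using norm_tsum_le_tsum_norm hnormsum
    _ ≤ ∑' n : ℕ, (2 / 4 ^ 88 : ℝ) * (1 / ((n : ℝ) + 1) ^ 2) :=
        Summable.tsum_le_tsum hb hnormsum hbsum
    _ = (2 / 4 ^ 88 : ℝ) * ∑' n : ℕ, 1 / ((n : ℝ) + 1) ^ 2 := tsum_mul_left
    _ ≤ (2 / 4 ^ 88 : ℝ) * 2 := by
        apply mul_le_mul_of_nonneg_left tsum_inv_sq_le (by positivity)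
    _ = 4 / 4 ^ 88 := by ring

/-- Counterexample to the Tomovski–Hilfer inequality in the case `β > 0`, `α > 0` real,
`μα − β > 1`: there exist such parameters and `r > 0` for which
`∑_{k≥1} 2(−1)^{k−1} k^β/(k^α + r^2)^μ > 2/(1 + r^2)^μ`. -/
theorem tomovski_hilfer_counterexample_real_alpha :
    ∃ β : ℝ, 0 < β ∧ ∃ α : ℝ, 0 < α ∧ ∃ μ : ℝ, 0 < μ ∧ μ * α - β > 1 ∧
      ∃ r : ℝ, 0 < r ∧
        (∑' k : ℕ+, 2 * (-1 : ℝ) ^ ((k : ℕ) - 1) * (k : ℝ) ^ β / ((k : ℝ) ^ α + r ^ 2) ^ μ) >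
          2 / (1 + r ^ 2) ^ μ := by
  refine ⟨10, by norm_num, 100, by norm_num, 1, by norm_num, by norm_num, 3 ^ 50,
    by positivity, ?_⟩
  have hr2 : ((3:ℝ) ^ 50) ^ 2 = 3 ^ 100 := by rw [← pow_mul]
  have hequiv : (∑' k : ℕ+, 2 * (-1 : ℝ) ^ ((k : ℕ) - 1) * (k : ℝ) ^ (10:ℝ) /
      ((k : ℝ) ^ (100:ℝ) + ((3:ℝ) ^ 50) ^ 2) ^ (1:ℝ)) = ∑' n : ℕ, thTerm n := by
    rw [← Equiv.tsum_eq Equiv.pnatEquivNat.symm]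
    congr 1
    funext n
    have h1 : ((Equiv.pnatEquivNat.symm n : ℕ+) : ℕ) = n + 1 := rfl
    rw [thTerm, h1, Nat.add_sub_cancel, Real.rpow_one,
      show (10:ℝ) = ((10:ℕ):ℝ) by norm_num, Real.rpow_natCast,
      show (100:ℝ) = ((100:ℕ):ℝ) by norm_num, Real.rpow_natCast, hr2]
    push_cast
    ring
  rw [hequiv, Real.rpow_one, hr2]
  rw [← Summable.sum_add_tsum_nat_add 4 summable_thTerm]
  have hT : -(4 / 4 ^ 88 : ℝ) ≤ ∑' n : ℕ, thTerm (n + 4) := (abs_le.mp thTerm_tail_bound).1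
  have hsum4 : (∑ i ∈ Finset.range 4, thTerm i) =
      2 / (1 + 3 ^ 100) - 2 * 2 ^ 10 / (2 ^ 100 + 3 ^ 100)
        + 2 * 3 ^ 10 / (3 ^ 100 + 3 ^ 100) - 2 * 4 ^ 10 / (4 ^ 100 + 3 ^ 100) := by
    simp [Finset.sum_range_succ, thTerm]
    norm_num
  rw [hsum4]
  have hnum : (0:ℝ) < - (2 * 2 ^ 10 / (2 ^ 100 + 3 ^ 100))
      + 2 * 3 ^ 10 / (3 ^ 100 + 3 ^ 100) - 2 * 4 ^ 10 / (4 ^ 100 + 3 ^ 100) - 4 / 4 ^ 88 := by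
    norm_num
  linarith
end
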